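/- For all x, x' ∈ ℝ, y ≠ 0, and λ ∈ ℂ with λ ∉ ℝ ∪ iℝ and λ_I ≠ ±κ, the Green function satisfies the reality symmetry conj(G(x,x',y,−conj(λ))) = G(x,x',y,λ); in fact conj(G_c(x,x',y,−conj(λ))) = G_c(x,x',y,λ) and conj(G_d(x,x',y,−conj(λ))) = G_d(x,x',y,λ). -/

import Mathlib

open MeasureTheory Filter Topology Set
open scoped ENNReal

noncomputable section

namespace KPII

/-- Heaviside step function: `1` for positive arguments, `0` otherwise. -/
def heav (t : ℝ) : ℝ := if 0 < t then 1 else 0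

/-- Continuous inverse cotangent with values in `(0, π)`. -/
def arccot (t : ℝ) : ℝ := Real.pi / 2 - Real.arctan t

def varphiP (κ x : ℝ) (l : ℂ) : ℂ :=
  1 - (2 * Complex.I * κ / (l + Complex.I * κ)) * (1 / (1 + Real.exp (-2 * κ * x)))

def varphiM (κ x : ℝ) (l : ℂ) : ℂ :=
  1 + (2 * Complex.I * κ / (l - Complex.I * κ)) * (1 / (1 + Real.exp (-2 * κ * x)))

def varthetaP (κ x : ℝ) (l : ℂ) : ℂ :=
  1 - (2 * Complex.I * κ / (l + Complex.I * κ)) * (1 / (1 + Real.exp (2 * κ * x)))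

def varthetaM (κ x : ℝ) (l : ℂ) : ℂ :=
  1 + (2 * Complex.I * κ / (l - Complex.I * κ)) * (1 / (1 + Real.exp (2 * κ * x)))

def phiP (κ x : ℝ) (l : ℂ) : ℂ := varphiP κ x l * Complex.exp (-(Complex.I) * l * x)
def phiM (κ x : ℝ) (l : ℂ) : ℂ := varphiM κ x l * Complex.exp (Complex.I * l * x)
def psiP (κ x : ℝ) (l : ℂ) : ℂ := varthetaP κ x l * Complex.exp (Complex.I * l * x)
def psiM (κ x : ℝ) (l : ℂ) : ℂ := varthetaM κ x l * Complex.exp (-(Complex.I) * l * x)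

def aP (κ : ℝ) (l : ℂ) : ℂ := (l - Complex.I * κ) / (l + Complex.I * κ)
def aM (κ : ℝ) (l : ℂ) : ℂ := (l + Complex.I * κ) / (l - Complex.I * κ)

/-- `a(λ)`: equal to `a₊` on the upper half plane and `a₋` on the lower half plane. -/
def aFn (κ : ℝ) (l : ℂ) : ℂ := if 0 < l.im then aP κ l else aM κ l

/-- `𝔤(x,x',λ)`. -/
def gFrak (κ x x' : ℝ) (l : ℂ) : ℂ :=
  if 0 < l.im then varphiP κ x l * varthetaP κ x' l else varphiM κ x' l * varthetaM κ x l

/-- Indicator of `{λ' : Re (λ² − (λ+λ')²) > 0}`. -/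
def chiP (l : ℂ) (t : ℝ) : ℝ := if 0 < (l ^ 2 - (l + t) ^ 2).re then 1 else 0

/-- Indicator of `{λ' : Re (λ² − (λ+λ')²) < 0}`. -/
def chiM (l : ℂ) (t : ℝ) : ℝ := if (l ^ 2 - (l + t) ^ 2).re < 0 then 1 else 0

/-- Continuous part of the Green function. -/
def Gc (κ x x' y : ℝ) (l : ℂ) : ℂ :=
  ∫ t : ℝ, ((heav y * chiM l t - heav (-y) * chiP l t : ℝ) : ℂ) *
    Complex.exp ((l ^ 2 - (l + t) ^ 2) * y) * phiP κ x (l + t) * psiP κ x' (l + t) /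
    (2 * Real.pi * aFn κ (l + t))

/-- Discrete part of the Green function. -/
def Gd (κ x x' y : ℝ) (l : ℂ) : ℂ :=
  ((-2 * heav (-y) * heav (κ - |l.im|) : ℝ) : ℂ) *
    Complex.exp ((l ^ 2 + (κ : ℂ) ^ 2) * y + ((Real.sign l.im * κ * (x - x') : ℝ) : ℂ)) *
    gFrak κ x x' ((Real.sign l.im : ℂ) * Complex.I * κ)

/-- The Green function `G`. -/
def G (κ x x' y : ℝ) (l : ℂ) : ℂ := Gc κ x x' y l + Gd κ x x' y l

/-- The Green function `G̃ = G e^{iλ(x−x')}`. -/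
def Gt (κ x x' y : ℝ) (l : ℂ) : ℂ := G κ x x' y l * Complex.exp (Complex.I * l * (x - x'))

/-- Mixed partial derivative `∂_y^j ∂_x^k` of a real-valued function on `ℝ²`. -/
def pdR (j k : ℕ) (v : ℝ → ℝ → ℝ) (x y : ℝ) : ℝ :=
  iteratedDeriv j (fun y' => iteratedDeriv k (fun x' => v x' y') x) y

/-- Mixed partial derivative `∂_y^j ∂_x^k` of a complex-valued function on `ℝ²`. -/
def pdC (j k : ℕ) (v : ℝ → ℝ → ℂ) (x y : ℝ) : ℂ :=
  iteratedDeriv j (fun y' => iteratedDeriv k (fun x' => v x' y') x) y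

/-- The set of regular spectral parameters: `λ ∉ ℝ ∪ iℝ` and `λ_I ≠ ±κ`. -/
def goodSet (κ : ℝ) : Set ℂ := {l : ℂ | l.re ≠ 0 ∧ l.im ≠ 0 ∧ l.im ≠ κ ∧ l.im ≠ -κ}

/-- Convolution with the Green function: `(G̃∗f)(x,y) = ∬ G̃(x,x',y−y',λ) f(x',y') dx'dy'`. -/
def GtConv (κ : ℝ) (l : ℂ) (f : ℝ → ℝ → ℂ) (x y : ℝ) : ℂ :=
  ∫ p : ℝ × ℝ, Gt κ x p.1 (y - p.2) l * f p.1 p.2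

/-- `m(·,·,λ)` is a bounded solution of the integral equation `m = ϑ₋ − G̃∗(v₀ m)`. -/
def IsEigen (κ : ℝ) (v₀ : ℝ → ℝ → ℝ) (l : ℂ) (m : ℝ → ℝ → ℂ) : Prop :=
  (∃ M, ∀ x y, ‖m x y‖ ≤ M) ∧
  ∀ x y, m x y = varthetaM κ x l - GtConv κ l (fun x' y' => (v₀ x' y' : ℂ) * m x' y') x y

/-- Membership in `L¹ ∩ L∞` for a function on `ℝ²`. -/
def InL1Linf (f : ℝ → ℝ → ℝ) : Prop :=
  MemLp (fun p : ℝ × ℝ => f p.1 p.2) 1 volume ∧ MemLp (fun p : ℝ × ℝ => f p.1 p.2) ⊤ volume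

/-- The `L¹ ∩ L∞` norm of a function on `ℝ²`. -/
def normL1Linf (f : ℝ → ℝ → ℝ) : ℝ≥0∞ :=
  eLpNorm (fun p : ℝ × ℝ => f p.1 p.2) 1 volume + eLpNorm (fun p : ℝ × ℝ => f p.1 p.2) ⊤ volume

/-- Continuous scattering data `s_c(λ)` built from `v₀` and a family `m` of eigenfunctions. -/
def scData (κ : ℝ) (v₀ : ℝ → ℝ → ℝ) (m : ℝ → ℝ → ℂ → ℂ) (l : ℂ) : ℂ :=
  if 0 < l.im then
    ((Real.sign l.re / (2 * Real.pi) : ℝ) : ℂ) *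
      ∫ p : ℝ × ℝ,
        Complex.exp (-(Complex.I) * ((4 * l.re * l.im * p.2 + 2 * l.re * p.1 : ℝ) : ℂ)) *
          varthetaP κ p.1 (-(starRingEnd ℂ l)) * (v₀ p.1 p.2 : ℂ) * m p.1 p.2 l
  else
    ((Real.sign l.re : ℝ) : ℂ) / (2 * Real.pi * aFn κ (-(starRingEnd ℂ l))) *
      ∫ p : ℝ × ℝ,
        Complex.exp (-(Complex.I) * ((4 * l.re * l.im * p.2 + 2 * l.re * p.1 : ℝ) : ℂ)) *
          varphiM κ p.1 (-(starRingEnd ℂ l)) * (v₀ p.1 p.2 : ℂ) * m p.1 p.2 l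

/-- Indicator `E_{z,a}` of the open disk of radius `a` centered at `z`. -/
def Eind (z : ℂ) (a : ℝ) (l : ℂ) : ℝ := if ‖l - z‖ < a then 1 else 0

/-- The kernel `𝔊₊(x,x',y)`. -/
def GFrakP (κ x x' y : ℝ) : ℂ :=
  (∫ η in {t : ℝ | 1 ≤ |t|}, ((heav y : ℝ) : ℂ) *
      Complex.exp (-(y : ℂ) * (η : ℂ) ^ 2 + Complex.I * (η : ℂ) * ((x' - x - 2 * κ * y : ℝ) : ℂ)) *
      gFrak κ x x' ((η : ℂ) + Complex.I * κ) / (2 * Real.pi * aFn κ ((η : ℂ) + Complex.I * κ))) +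
  (∫ η in Set.Icc (-1 : ℝ) 1, ((heav y : ℝ) : ℂ) *
      (Complex.exp (-(y : ℂ) * (η : ℂ) ^ 2 + Complex.I * (η : ℂ) * ((x' - x - 2 * κ * y : ℝ) : ℂ)) *
          gFrak κ x x' ((η : ℂ) + Complex.I * κ) - gFrak κ x x' (Complex.I * κ)) /
      (2 * Real.pi * aFn κ ((η : ℂ) + Complex.I * κ))) +
  gFrak κ x x' (Complex.I * κ) * ((heav y * (1 + 1 / Real.pi) - 2 : ℝ) : ℂ)

/-- The kernel `𝔊₋(x,x',y)`. -/
def GFrakM (κ x x' y : ℝ) : ℂ :=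
  (∫ η in {t : ℝ | 1 ≤ |t|}, ((heav y : ℝ) : ℂ) *
      Complex.exp (-(y : ℂ) * (η : ℂ) ^ 2 + Complex.I * (η : ℂ) * ((x' - x + 2 * κ * y : ℝ) : ℂ)) *
      gFrak κ x x' ((η : ℂ) - Complex.I * κ) / (2 * Real.pi * aFn κ ((η : ℂ) - Complex.I * κ))) +
  (∫ η in Set.Icc (-1 : ℝ) 1, ((heav y : ℝ) : ℂ) *
      (Complex.exp (-(y : ℂ) * (η : ℂ) ^ 2 + Complex.I * (η : ℂ) * ((x' - x + 2 * κ * y : ℝ) : ℂ)) *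
          gFrak κ x x' ((η : ℂ) - Complex.I * κ) - gFrak κ x x' (-(Complex.I) * κ)) /
      (2 * Real.pi * aFn κ ((η : ℂ) - Complex.I * κ))) +
  gFrak κ x x' (-(Complex.I) * κ) * ((heav y * (1 + 1 / Real.pi) - 2 : ℝ) : ℂ)

/-- The regularized eigenfunction `𝔪(x,y,λ) = ((λ−iκ)/(λ−2iκ)) m(x,y,λ)`. -/
def mReg (κ : ℝ) (m : ℝ → ℝ → ℂ → ℂ) (x y : ℝ) (l : ℂ) : ℂ :=
  ((l - Complex.I * κ) / (l - 2 * Complex.I * κ)) * m x y l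

/-- The regularized continuous scattering data `𝔰_c(λ)`. -/
def scReg (κ : ℝ) (v₀ : ℝ → ℝ → ℝ) (m : ℝ → ℝ → ℂ → ℂ) (l : ℂ) : ℂ :=
  ((l - Complex.I * κ) * (-(starRingEnd ℂ l) - 2 * Complex.I * κ)) /
    ((l - 2 * Complex.I * κ) * (-(starRingEnd ℂ l) - Complex.I * κ)) * scData κ v₀ m l

/-- The forward scattering transform `(T𝔪)(x,y,ζ)`. -/
def Tm (κ : ℝ) (v₀ : ℝ → ℝ → ℝ) (m : ℝ → ℝ → ℂ → ℂ) (x y : ℝ) (ζ : ℂ) : ℂ :=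
  scReg κ v₀ m ζ * Complex.exp (Complex.I * ((4 * ζ.re * ζ.im * y + 2 * ζ.re * x : ℝ) : ℂ)) *
    mReg κ m x y (-(starRingEnd ℂ ζ))

private lemma conj_ratP (κ : ℝ) (m : ℂ) :
    (starRingEnd ℂ) (2 * Complex.I * κ / (-(starRingEnd ℂ m) + Complex.I * κ)) =
      2 * Complex.I * κ / (m + Complex.I * κ) := by
  rw [map_div₀]
  simp only [map_mul, map_ofNat, Complex.conj_I, Complex.conj_ofReal, map_add, map_neg,
    Complex.conj_conj]
  rw [show -m + -Complex.I * (κ:ℂ) = -(m + Complex.I * κ) by ring,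
    show 2 * -Complex.I * (κ:ℂ) = -(2 * Complex.I * κ) by ring, neg_div_neg_eq]

private lemma conj_ratM (κ : ℝ) (m : ℂ) :
    (starRingEnd ℂ) (2 * Complex.I * κ / (-(starRingEnd ℂ m) - Complex.I * κ)) =
      2 * Complex.I * κ / (m - Complex.I * κ) := by
  rw [map_div₀]
  simp only [map_mul, map_ofNat, Complex.conj_I, Complex.conj_ofReal, map_sub, map_neg,
    Complex.conj_conj]
  rw [show -m - -Complex.I * (κ:ℂ) = -(m - Complex.I * κ) by ring,
    show 2 * -Complex.I * (κ:ℂ) = -(2 * Complex.I * κ) by ring, neg_div_neg_eq]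

private lemma conj_varphiP (κ x : ℝ) (m : ℂ) :
    (starRingEnd ℂ) (varphiP κ x (-(starRingEnd ℂ m))) = varphiP κ x m := by
  unfold varphiP
  rw [map_sub, map_mul, conj_ratP, map_one]
  congr 1
  rw [map_div₀, map_one, map_add, map_one, Complex.conj_ofReal]

private lemma conj_varthetaP (κ x : ℝ) (m : ℂ) :
    (starRingEnd ℂ) (varthetaP κ x (-(starRingEnd ℂ m))) = varthetaP κ x m := by
  unfold varthetaP
  rw [map_sub, map_mul, conj_ratP, map_one]
  congr 1
  rw [map_div₀, map_one, map_add, map_one, Complex.conj_ofReal]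

private lemma conj_varphiM (κ x : ℝ) (m : ℂ) :
    (starRingEnd ℂ) (varphiM κ x (-(starRingEnd ℂ m))) = varphiM κ x m := by
  unfold varphiM
  rw [map_add, map_mul, conj_ratM, map_one]
  congr 1
  rw [map_div₀, map_one, map_add, map_one, Complex.conj_ofReal]

private lemma conj_varthetaM (κ x : ℝ) (m : ℂ) :
    (starRingEnd ℂ) (varthetaM κ x (-(starRingEnd ℂ m))) = varthetaM κ x m := by
  unfold varthetaM
  rw [map_add, map_mul, conj_ratM, map_one]
  congr 1
  rw [map_div₀, map_one, map_add, map_one, Complex.conj_ofReal]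

private lemma conj_phiP (κ x : ℝ) (m : ℂ) :
    (starRingEnd ℂ) (phiP κ x (-(starRingEnd ℂ m))) = phiP κ x m := by
  unfold phiP
  rw [map_mul, conj_varphiP, ← Complex.exp_conj]
  congr 2
  simp only [map_mul, map_neg, Complex.conj_I, Complex.conj_ofReal, Complex.conj_conj]
  ring

private lemma conj_psiP (κ x : ℝ) (m : ℂ) :
    (starRingEnd ℂ) (psiP κ x (-(starRingEnd ℂ m))) = psiP κ x m := by
  unfold psiP
  rw [map_mul, conj_varthetaP, ← Complex.exp_conj]
  congr 2
  simp only [map_mul, map_neg, Complex.conj_I, Complex.conj_ofReal, Complex.conj_conj]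
  ring

private lemma neg_conj_im (m : ℂ) : (-(starRingEnd ℂ m)).im = m.im := by
  simp

private lemma conj_aFn (κ : ℝ) (m : ℂ) :
    (starRingEnd ℂ) (aFn κ (-(starRingEnd ℂ m))) = aFn κ m := by
  unfold aFn aP aM
  rw [neg_conj_im]
  split_ifs with h
  · rw [map_div₀]
    simp only [map_sub, map_add, map_mul, map_neg, Complex.conj_I, Complex.conj_ofReal,
      Complex.conj_conj]
    rw [show -m - -Complex.I * (κ:ℂ) = -(m - Complex.I * κ) by ring,
      show -m + -Complex.I * (κ:ℂ) = -(m + Complex.I * κ) by ring, neg_div_neg_eq]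
  · rw [map_div₀]
    simp only [map_sub, map_add, map_mul, map_neg, Complex.conj_I, Complex.conj_ofReal,
      Complex.conj_conj]
    rw [show -m - -Complex.I * (κ:ℂ) = -(m - Complex.I * κ) by ring,
      show -m + -Complex.I * (κ:ℂ) = -(m + Complex.I * κ) by ring, neg_div_neg_eq]

private lemma conj_quad (l : ℂ) (t : ℝ) :
    (-(starRingEnd ℂ l)) ^ 2 - (-(starRingEnd ℂ l) + ((-t : ℝ) : ℂ)) ^ 2 =
      (starRingEnd ℂ) (l ^ 2 - (l + t) ^ 2) := by
  simp only [map_sub, map_pow, map_add, Complex.conj_ofReal]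
  push_cast
  ring

private lemma neg_conj_add (l : ℂ) (t : ℝ) :
    -(starRingEnd ℂ l) + ((-t : ℝ) : ℂ) = -(starRingEnd ℂ (l + t)) := by
  simp only [map_add, Complex.conj_ofReal]
  push_cast
  ring

private lemma conj_Gc (κ : ℝ) (x x' y : ℝ) (l : ℂ) :
    (starRingEnd ℂ) (Gc κ x x' y (-(starRingEnd ℂ l))) = Gc κ x x' y l := by
  unfold Gc
  rw [← integral_conj]
  rw [← MeasureTheory.integral_neg_eq_self
    (fun t : ℝ => (starRingEnd ℂ)
      (((heav y * chiM (-(starRingEnd ℂ l)) t - heav (-y) * chiP (-(starRingEnd ℂ l)) t : ℝ) : ℂ) *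
        Complex.exp (((-(starRingEnd ℂ l)) ^ 2 - (-(starRingEnd ℂ l) + t) ^ 2) * y) *
        phiP κ x (-(starRingEnd ℂ l) + t) * psiP κ x' (-(starRingEnd ℂ l) + t) /
        (2 * Real.pi * aFn κ (-(starRingEnd ℂ l) + t)))) volume]
  refine MeasureTheory.integral_congr_ae (Filter.Eventually.of_forall fun t => ?_)
  simp only
  have harg : -(starRingEnd ℂ l) + ((-t : ℝ) : ℂ) = -(starRingEnd ℂ (l + t)) :=
    neg_conj_add l t
  have hquad : (-(starRingEnd ℂ l)) ^ 2 - (-(starRingEnd ℂ l) + ((-t : ℝ) : ℂ)) ^ 2 =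
      (starRingEnd ℂ) (l ^ 2 - (l + t) ^ 2) := conj_quad l t
  have hre : ((-(starRingEnd ℂ l)) ^ 2 - (-(starRingEnd ℂ l) + ((-t : ℝ) : ℂ)) ^ 2).re =
      (l ^ 2 - (l + t) ^ 2).re := by rw [hquad, Complex.conj_re]
  have hchiM : chiM (-(starRingEnd ℂ l)) (-t) = chiM l t := by
    unfold chiM
    push_cast at hre ⊢
    rw [hre]
  have hchiP : chiP (-(starRingEnd ℂ l)) (-t) = chiP l t := by
    unfold chiP
    push_cast at hre ⊢
    rw [hre]
  have hexp : (starRingEnd ℂ) (Complex.exp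
      (((-(starRingEnd ℂ l)) ^ 2 - (-(starRingEnd ℂ l) + ((-t : ℝ) : ℂ)) ^ 2) * y)) =
      Complex.exp ((l ^ 2 - (l + t) ^ 2) * y) := by
    rw [← Complex.exp_conj, map_mul, hquad, Complex.conj_conj, Complex.conj_ofReal]
  simp only [map_div₀, map_mul, Complex.conj_ofReal, map_ofNat]
  rw [hexp, harg, conj_phiP, conj_psiP, conj_aFn, hchiM, hchiP]

private lemma real_varphiP_ik (κ x : ℝ) (hκ : 0 < κ) :
    varphiP κ x (Complex.I * κ) = ((1 - 1 / (1 + Real.exp (-2 * κ * x)) : ℝ) : ℂ) := by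
  unfold varphiP
  have h2 : (Complex.I * κ + Complex.I * κ) = 2 * Complex.I * κ := by ring
  have hne : (2 * Complex.I * κ : ℂ) ≠ 0 := by
    simp [Complex.ext_iff, hκ.ne', Complex.I_ne_zero]
  rw [h2, div_self hne]
  push_cast
  ring

private lemma real_varthetaP_ik (κ x : ℝ) (hκ : 0 < κ) :
    varthetaP κ x (Complex.I * κ) = ((1 - 1 / (1 + Real.exp (2 * κ * x)) : ℝ) : ℂ) := by
  unfold varthetaP
  have h2 : (Complex.I * κ + Complex.I * κ) = 2 * Complex.I * κ := by ring
  have hne : (2 * Complex.I * κ : ℂ) ≠ 0 := by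
    simp [Complex.ext_iff, hκ.ne', Complex.I_ne_zero]
  rw [h2, div_self hne]
  push_cast
  ring

private lemma real_varphiM_ik (κ x : ℝ) (hκ : 0 < κ) :
    varphiM κ x (-(Complex.I) * κ) = ((1 - 1 / (1 + Real.exp (-2 * κ * x)) : ℝ) : ℂ) := by
  unfold varphiM
  have h2 : (-(Complex.I) * κ - Complex.I * κ) = -(2 * Complex.I * κ) := by ring
  have hne : (2 * Complex.I * κ : ℂ) ≠ 0 := by
    simp [Complex.ext_iff, hκ.ne', Complex.I_ne_zero]
  rw [h2, div_neg, div_self hne]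
  push_cast
  ring

private lemma real_varthetaM_ik (κ x : ℝ) (hκ : 0 < κ) :
    varthetaM κ x (-(Complex.I) * κ) = ((1 - 1 / (1 + Real.exp (2 * κ * x)) : ℝ) : ℂ) := by
  unfold varthetaM
  have h2 : (-(Complex.I) * κ - Complex.I * κ) = -(2 * Complex.I * κ) := by ring
  have hne : (2 * Complex.I * κ : ℂ) ≠ 0 := by
    simp [Complex.ext_iff, hκ.ne', Complex.I_ne_zero]
  rw [h2, div_neg, div_self hne]
  push_cast
  ring

private lemma conj_gFrak_sik (κ x x' : ℝ) (hκ : 0 < κ) (s : ℝ) (hs : s = 1 ∨ s = -1) :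
    (starRingEnd ℂ) (gFrak κ x x' ((s : ℂ) * Complex.I * κ)) =
      gFrak κ x x' ((s : ℂ) * Complex.I * κ) := by
  rcases hs with hs | hs <;> subst hs
  · have harg : ((1 : ℝ) : ℂ) * Complex.I * κ = Complex.I * κ := by push_cast; ring
    rw [harg]
    have him : (Complex.I * (κ : ℂ)).im = κ := by simp
    unfold gFrak
    rw [him, if_pos hκ, real_varphiP_ik κ x hκ, real_varthetaP_ik κ x' hκ,
      map_mul, Complex.conj_ofReal, Complex.conj_ofReal]
  · have harg : ((-1 : ℝ) : ℂ) * Complex.I * κ = -(Complex.I) * κ := by push_cast; ring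
    rw [harg]
    have him : (-(Complex.I) * (κ : ℂ)).im = -κ := by simp
    unfold gFrak
    rw [him, if_neg (by linarith), real_varphiM_ik κ x' hκ, real_varthetaM_ik κ x hκ,
      map_mul, Complex.conj_ofReal, Complex.conj_ofReal]

private lemma conj_Gd (κ : ℝ) (hκ : 0 < κ) (x x' y : ℝ) (l : ℂ) (him : l.im ≠ 0) :
    (starRingEnd ℂ) (Gd κ x x' y (-(starRingEnd ℂ l))) = Gd κ x x' y l := by
  unfold Gd
  rw [neg_conj_im]
  rw [map_mul, map_mul, Complex.conj_ofReal, ← Complex.exp_conj]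
  have hsgn : Real.sign l.im = 1 ∨ Real.sign l.im = -1 := by
    rcases lt_or_gt_of_ne him with h | h
    · exact Or.inr (Real.sign_of_neg h)
    · exact Or.inl (Real.sign_of_pos h)
  rw [conj_gFrak_sik κ x x' hκ _ hsgn]
  congr 2
  simp only [map_add, map_mul, map_pow, map_neg, Complex.conj_conj, Complex.conj_ofReal,
    map_ofNat]
  ring

/-- reality symmetry of the Green function. -/
theorem stmt8 (κ : ℝ) (hκ : 0 < κ) (x x' y : ℝ) (hy : y ≠ 0) (l : ℂ)
    (hre : l.re ≠ 0) (him : l.im ≠ 0) (h1 : l.im ≠ κ) (h2 : l.im ≠ -κ) :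
    (starRingEnd ℂ) (G κ x x' y (-(starRingEnd ℂ l))) = G κ x x' y l ∧
    (starRingEnd ℂ) (Gc κ x x' y (-(starRingEnd ℂ l))) = Gc κ x x' y l ∧
    (starRingEnd ℂ) (Gd κ x x' y (-(starRingEnd ℂ l))) = Gd κ x x' y l := by
  have hc := conj_Gc κ x x' y l
  have hd := conj_Gd κ hκ x x' y l him
  refine ⟨?_, hc, hd⟩
  unfold G
  rw [map_add, hc, hd]



end KPII
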